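/- Let P ⊆ ℝ³ be a convex polyhedron with 0 in its interior and let q ∈ ∂P be a regular point, i.e. there exists x ∈ P with ⟪x, q⟫ > ‖q‖². Then there is a unique boundary-tangent direction v₀ of P at q of steepest ascent: ⟪q, v₀⟫ > 0, and every boundary-tangent direction v of P at q with v ≠ v₀ satisfies ⟪q, v⟫ < ⟪q, v₀⟫. (This is the regular-point part of the paper's theorem on existence and uniqueness of the extended gradient of the radial distance function.) -/

import Mathlib

set_option maxHeartbeats 1000000
set_option synthInstance.maxHeartbeats 1000000

open scoped RealInnerProductSpace Pointwise


open scoped RealInnerProductSpace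

lemma coeff_bound {E : Type*} [NormedAddCommGroup E] [NormedSpace ℝ E] [FiniteDimensional ℝ E]
    (t : Finset E) (hli : LinearIndependent ℝ (fun i : {x : E // x ∈ t} => (i : E))) :
    ∃ C : ℝ, 0 < C ∧ ∀ g : E → ℝ, ∑ i ∈ t, |g i| ≤ C * ‖∑ i ∈ t, g i • i‖ := by
  classical
  set v : {x : E // x ∈ t} → E := fun i => (i : E) with hv
  have hcoord : ∀ i : {x : E // x ∈ t}, ∃ Ci : ℝ, 0 ≤ Ci ∧ ∀ x : Submodule.span ℝ (Set.range v),
      |hli.repr x i| ≤ Ci * ‖x‖ := by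
    intro i
    let L : Submodule.span ℝ (Set.range v) →ₗ[ℝ] ℝ := (Finsupp.lapply i).comp hli.repr
    let L' := LinearMap.toContinuousLinearMap L
    refine ⟨‖L'‖, ContinuousLinearMap.opNorm_nonneg _, fun x => ?_⟩
    have := L'.le_opNorm x
    simpa [L', L] using this
  choose Ci hCinn hCi using hcoord
  refine ⟨∑ i ∈ t.attach, Ci i + 1, add_pos_of_nonneg_of_pos (Finset.sum_nonneg fun i _ => hCinn i) one_pos, fun g => ?_⟩
  set x : E := ∑ i ∈ t, g i • i with hx
  have hxmem : x ∈ Submodule.span ℝ (Set.range v) := by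
    have : Set.range v = (t : Set E) := Subtype.range_coe
    rw [this]
    exact Submodule.sum_smul_mem _ _ (fun i hi => Submodule.subset_span hi)
  set X : Submodule.span ℝ (Set.range v) := ⟨x, hxmem⟩
  set l : {x : E // x ∈ t} →₀ ℝ := Finsupp.equivFunOnFinite.symm (fun i => g i) with hl
  have hrepr : hli.repr X = l := by
    apply hli.repr_eq
    have h1 : Finsupp.linearCombination ℝ v l = ∑ i ∈ t.attach, g i • (i : E) := by
      rw [Finsupp.linearCombination_apply, Finsupp.sum_fintype]
      · rfl
      · intro i; simp
    rw [h1]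
    show _ = x
    rw [hx, ← Finset.sum_attach t (fun i => g i • i)]
  have hXnorm : ‖X‖ = ‖x‖ := rfl
  have key : ∀ i : {x : E // x ∈ t}, |g i| ≤ Ci i * ‖x‖ := by
    intro i
    have := hCi i X
    rw [hrepr] at this
    simpa [l, hXnorm] using this
  calc ∑ i ∈ t, |g i| = ∑ i ∈ t.attach, |g (i : E)| :=
        (Finset.sum_attach t (fun i => |g i|)).symm
    _ ≤ ∑ i ∈ t.attach, Ci i * ‖x‖ := Finset.sum_le_sum fun i _ => key i
    _ = (∑ i ∈ t.attach, Ci i) * ‖x‖ := by rw [← Finset.sum_mul]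
    _ ≤ (∑ i ∈ t.attach, Ci i + 1) * ‖x‖ := by
        have h1 : (0:ℝ) ≤ ‖x‖ := norm_nonneg x
        have h2 : (0:ℝ) ≤ ∑ i ∈ t.attach, Ci i * ‖x‖ := by
          apply Finset.sum_nonneg; intro i _
          exact le_trans (abs_nonneg _) (key i)
        nlinarith [Finset.sum_mul (t.attach) Ci ‖x‖]


lemma cone_caratheodory {E : Type*} [NormedAddCommGroup E] [NormedSpace ℝ E] :
    ∀ (t : Finset E) (f : E → ℝ), (∀ i ∈ t, 0 ≤ f i) →
    ∃ t' : Finset E, t' ⊆ t ∧ LinearIndependent ℝ (fun i : {x : E // x ∈ t'} => (i : E)) ∧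
      ∃ g : E → ℝ, (∀ i ∈ t', 0 ≤ g i) ∧ ∑ i ∈ t', g i • i = ∑ i ∈ t, f i • i := by
  classical
  intro t
  induction t using Finset.strongInductionOn with
  | _ t IH =>
    intro f hf
    by_cases hli : LinearIndependent ℝ (fun i : {x : E // x ∈ t} => (i : E))
    · exact ⟨t, Finset.Subset.refl t, hli, f, hf, rfl⟩
    · -- extract a dependence relation
      have hdep : ∃ l : E →₀ ℝ, l ∈ Finsupp.supported ℝ ℝ (t : Set E) ∧
          ∑ i ∈ l.support, l i • i = 0 ∧ l ≠ 0 := by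
        have h2 := (linearDepOn_iff (R := ℝ) (v := (id : E → E))
          (s := (t : Set E))).1 (fun h => hli h)
        simpa using h2
      obtain ⟨l, hlsupp, hlsum, hlne⟩ := hdep
      -- a coefficient function c : E → ℝ with ∑_{i∈t} c i • i = 0 and some positive coefficient
      have hmain : ∀ c : E → ℝ, (∀ i, i ∉ t → c i = 0) → (∑ i ∈ t, c i • i = 0) →
          (∃ i ∈ t, 0 < c i) →
          ∃ t' : Finset E, t' ⊆ t ∧
            LinearIndependent ℝ (fun i : {x : E // x ∈ t'} => (i : E)) ∧
          ∃ g : E → ℝ, (∀ i ∈ t', 0 ≤ g i) ∧ ∑ i ∈ t', g i • i = ∑ i ∈ t, f i • i := by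
        intro c hc0 hcsum ⟨i₁, hi₁t, hi₁pos⟩
        set s' := t.filter (fun i => 0 < c i) with hs'
        have hs'ne : s'.Nonempty := ⟨i₁, Finset.mem_filter.2 ⟨hi₁t, hi₁pos⟩⟩
        obtain ⟨i₀, hi₀s', hi₀min⟩ := Finset.exists_min_image s' (fun i => f i / c i) hs'ne
        have hi₀t : i₀ ∈ t := (Finset.mem_filter.1 hi₀s').1
        have hi₀pos : 0 < c i₀ := (Finset.mem_filter.1 hi₀s').2
        set r := f i₀ / c i₀ with hr
        have hrnn : 0 ≤ r := div_nonneg (hf i₀ hi₀t) hi₀pos.le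
        set f' : E → ℝ := fun i => f i - r * c i with hf'
        have hf'nn : ∀ i ∈ t, 0 ≤ f' i := by
          intro i hit
          simp only [hf']
          by_cases hci : 0 < c i
          · have hmin : r ≤ f i / c i := hi₀min i (Finset.mem_filter.2 ⟨hit, hci⟩)
            have h3 : r * c i ≤ f i / c i * c i := mul_le_mul_of_nonneg_right hmin hci.le
            rw [div_mul_cancel₀ _ hci.ne'] at h3
            linarith
          · push_neg at hci
            nlinarith [hf i hit]
        have hf'i₀ : f' i₀ = 0 := by
          simp only [hf', hr]
          field_simp
          ring
        have hsum' : ∑ i ∈ t, f' i • i = ∑ i ∈ t, f i • i := by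
          simp only [hf', sub_smul, mul_smul, Finset.sum_sub_distrib]
          rw [← Finset.smul_sum, hcsum, smul_zero, sub_zero]
        have hsum'' : ∑ i ∈ t.erase i₀, f' i • i = ∑ i ∈ t, f i • i := by
          rw [← hsum', ← Finset.add_sum_erase t _ hi₀t, hf'i₀, zero_smul, zero_add]
        obtain ⟨t', ht'sub, ht'li, g, hgnn, hgsum⟩ :=
          IH (t.erase i₀) (Finset.erase_ssubset hi₀t) f' (fun i hit => hf'nn i (Finset.mem_of_mem_erase hit))
        exact ⟨t', ht'sub.trans (Finset.erase_subset _ _), ht'li, g, hgnn, hgsum.trans hsum''⟩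
      -- build c from l
      obtain ⟨i₁, hi₁⟩ : ∃ i, l i ≠ 0 := Finsupp.ne_iff.1 hlne
      have hi₁t : i₁ ∈ t := by
        have := (Finsupp.mem_supported ℝ l).1 hlsupp (Finsupp.mem_support_iff.2 hi₁)
        exact this
      have hlsum' : ∑ i ∈ t, l i • i = 0 := by
        rw [← hlsum]
        apply (Finset.sum_subset _ _).symm
        · intro i hi
          have := (Finsupp.mem_supported ℝ l).1 hlsupp hi
          exact this
        · intro i _ hi
          rw [Finsupp.notMem_support_iff.1 hi, zero_smul]
      rcases lt_or_gt_of_ne hi₁ with hneg | hpos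
      · refine hmain (fun i => -(l i)) (fun i hit => ?_) ?_ ⟨i₁, hi₁t, by simpa using neg_pos.2 hneg⟩
        · have : l i = 0 := by
            by_contra h
            exact hit ((Finsupp.mem_supported ℝ l).1 hlsupp (Finsupp.mem_support_iff.2 h))
          simp [this]
        · simp only [neg_smul, Finset.sum_neg_distrib, hlsum', neg_zero]
      · refine hmain (fun i => l i) (fun i hit => ?_) hlsum' ⟨i₁, hi₁t, hpos⟩
        by_contra h
        exact hit ((Finsupp.mem_supported ℝ l).1 hlsupp (Finsupp.mem_support_iff.2 h))


lemma cone_local {E : Type*} [NormedAddCommGroup E] [NormedSpace ℝ E] [FiniteDimensional ℝ E]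
    (W : Finset E) :
    ∃ δ : ℝ, 0 < δ ∧ ∀ f : E → ℝ, (∀ i ∈ W, 0 ≤ f i) → ‖∑ i ∈ W, f i • i‖ < δ →
      ∃ g : E → ℝ, (∀ i ∈ W, 0 ≤ g i) ∧ ∑ i ∈ W, g i ≤ 1 ∧
        ∑ i ∈ W, g i • i = ∑ i ∈ W, f i • i := by
  classical
  have hCu : ∀ u : Finset E, ∃ C : ℝ, 0 < C ∧
      (LinearIndependent ℝ (fun i : {x : E // x ∈ u} => (i : E)) →
        ∀ g : E → ℝ, ∑ i ∈ u, |g i| ≤ C * ‖∑ i ∈ u, g i • i‖) := by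
    intro u
    by_cases hli : LinearIndependent ℝ (fun i : {x : E // x ∈ u} => (i : E))
    · obtain ⟨C, hC, hbound⟩ := coeff_bound u hli
      exact ⟨C, hC, fun _ => hbound⟩
    · exact ⟨1, one_pos, fun h => absurd h hli⟩
  choose Cf hCfpos hCf using hCu
  have hpne : (W.powerset).Nonempty := ⟨∅, Finset.empty_mem_powerset W⟩
  set C : ℝ := W.powerset.sup' hpne Cf with hC
  have hCpos : 0 < C := lt_of_lt_of_le (hCfpos ∅) (Finset.le_sup' Cf (Finset.empty_mem_powerset W))
  refine ⟨C⁻¹, inv_pos.2 hCpos, fun f hf hnorm => ?_⟩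
  obtain ⟨t', ht'sub, ht'li, g, hgnn, hgsum⟩ := cone_caratheodory W f hf
  refine ⟨fun i => if i ∈ t' then g i else 0, fun i _ => ?_, ?_, ?_⟩
  · by_cases h : i ∈ t'
    · simpa [h] using hgnn i h
    · simp [h]
  · have h1 : ∑ i ∈ W, (if i ∈ t' then g i else 0) = ∑ i ∈ t', g i := by
      rw [Finset.sum_ite_mem, Finset.inter_eq_right.2 ht'sub]
    rw [h1]
    have h2 : ∑ i ∈ t', g i ≤ ∑ i ∈ t', |g i| :=
      Finset.sum_le_sum fun i _ => le_abs_self _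
    have h3 : ∑ i ∈ t', |g i| ≤ Cf t' * ‖∑ i ∈ t', g i • i‖ :=
      hCf t' ht'li g
    have h4 : Cf t' ≤ C := Finset.le_sup' Cf (Finset.mem_powerset.2 ht'sub)
    have h5 : ‖∑ i ∈ t', g i • i‖ < C⁻¹ := by rw [hgsum]; exact hnorm
    have h6 : Cf t' * ‖∑ i ∈ t', g i • i‖ ≤ C * ‖∑ i ∈ t', g i • i‖ :=
      mul_le_mul_of_nonneg_right h4 (norm_nonneg _)
    have h7 : C * ‖∑ i ∈ t', g i • i‖ ≤ C * C⁻¹ :=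
      mul_le_mul_of_nonneg_left h5.le hCpos.le
    rw [mul_inv_cancel₀ hCpos.ne'] at h7
    linarith
  · have h1 : ∑ i ∈ W, (if i ∈ t' then g i else 0) • i = ∑ i ∈ t', g i • i := by
      rw [← Finset.sum_subset ht'sub (fun x _ hnx => by simp [hnx])]
      exact Finset.sum_congr rfl fun i hi => by simp [hi]
    rw [h1, hgsum]



theorem unique_steepest_ascent_direction_at_regular_point
    (S : Set (EuclideanSpace ℝ (Fin 3))) (hSfin : S.Finite)
    (P : Set (EuclideanSpace ℝ (Fin 3))) (hP : P = convexHull ℝ S)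
    (h0 : (0 : EuclideanSpace ℝ (Fin 3)) ∈ interior P)
    (q : EuclideanSpace ℝ (Fin 3)) (hq : q ∈ frontier P)
    (hreg : ∃ x ∈ P, ‖q‖ ^ 2 < ⟪x, q⟫) :
    ∃! v₀ : EuclideanSpace ℝ (Fin 3),
      (‖v₀‖ = 1 ∧ ∃ ε > (0 : ℝ), ∀ t ∈ Set.Icc (0 : ℝ) ε, q + t • v₀ ∈ frontier P) ∧
      0 < ⟪q, v₀⟫ ∧
      ∀ v : EuclideanSpace ℝ (Fin 3),
        (‖v‖ = 1 ∧ ∃ ε > (0 : ℝ), ∀ t ∈ Set.Icc (0 : ℝ) ε, q + t • v ∈ frontier P) →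
        v ≠ v₀ → ⟪q, v⟫ < ⟪q, v₀⟫ := by
  classical
  have hPconv : Convex ℝ P := hP ▸ convex_convexHull ℝ S
  have hPcl : IsClosed P := hP ▸ hSfin.isClosed_convexHull ℝ
  have hqcl : q ∈ closure P := hq.1
  have hqP : q ∈ P := hPcl.closure_eq ▸ hqcl
  have hqni : q ∉ interior P := hq.2
  have hq0 : q ≠ 0 := fun h => hqni (h ▸ h0)
  have hqnorm : 0 < ‖q‖ := norm_pos_iff.2 hq0
  set Sfin := hSfin.toFinset with hSfin'
  have hScoe : (Sfin : Set (EuclideanSpace ℝ (Fin 3))) = S := hSfin.coe_toFinset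
  set W : Finset (EuclideanSpace ℝ (Fin 3)) := Sfin.image (fun s => s - q) with hWdef
  set K : Set (EuclideanSpace ℝ (Fin 3)) :=
    {v | ∃ f : EuclideanSpace ℝ (Fin 3) → ℝ, (∀ i ∈ W, 0 ≤ f i) ∧ v = ∑ i ∈ W, f i • i}
    with hKdef
  -- membership of scaled differences
  have hKsub : ∀ c : ℝ, 0 ≤ c → ∀ x ∈ P, c • (x - q) ∈ K := by
    intro c hc x hx
    rw [hP, ← hScoe, Finset.convexHull_eq] at hx
    obtain ⟨w, hwnn, hwsum, hwx⟩ := hx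
    have hxw : ∑ y ∈ Sfin, w y • y = x := by
      rw [← hwx, Finset.centerMass_eq_of_sum_1 _ _ hwsum]
      rfl
    have hxq : ∑ y ∈ Sfin, w y • (y - q) = x - q := by
      simp only [smul_sub, Finset.sum_sub_distrib, ← Finset.sum_smul, hwsum, one_smul, hxw]
    refine ⟨fun i => c * ∑ y ∈ Sfin.filter (fun y => y - q = i), w y, fun i _ => ?_, ?_⟩
    · exact mul_nonneg hc (Finset.sum_nonneg fun y hy => hwnn y (Finset.mem_filter.1 hy).1)
    · have h1 : ∀ i ∈ W, (c * ∑ y ∈ Sfin.filter (fun y => y - q = i), w y) • i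
          = c • ∑ y ∈ Sfin.filter (fun y => y - q = i), w y • (y - q) := by
        intro i _
        have h2 : ∑ y ∈ Sfin.filter (fun y => y - q = i), w y • (y - q)
            = (∑ y ∈ Sfin.filter (fun y => y - q = i), w y) • i := by
          rw [Finset.sum_smul]
          refine Finset.sum_congr rfl fun y hy => ?_
          rw [(Finset.mem_filter.1 hy).2]
        rw [h2, mul_smul]
      rw [← hxq, ← Finset.sum_fiberwise_of_maps_to
        (fun y hy => Finset.mem_image_of_mem (fun s => s - q) hy)
        (fun y => w y • (y - q)), Finset.smul_sum]
      exact (Finset.sum_congr rfl h1).symm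
  have hKcone : ∀ c : ℝ, 0 ≤ c → ∀ v ∈ K, c • v ∈ K := by
    rintro c hc v ⟨f, hfnn, rfl⟩
    refine ⟨fun i => c * f i, fun i hi => mul_nonneg hc (hfnn i hi), ?_⟩
    rw [Finset.smul_sum]
    exact Finset.sum_congr rfl fun i _ => (mul_smul c (f i) i).symm
  have hKconv : Convex ℝ K := by
    rintro v₁ ⟨f₁, hf₁, rfl⟩ v₂ ⟨f₂, hf₂, rfl⟩ a b ha hb hab
    refine ⟨fun i => a * f₁ i + b * f₂ i, fun i hi =>
      add_nonneg (mul_nonneg ha (hf₁ i hi)) (mul_nonneg hb (hf₂ i hi)), ?_⟩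
    rw [Finset.smul_sum, Finset.smul_sum, ← Finset.sum_add_distrib]
    exact Finset.sum_congr rfl fun i _ => by rw [add_smul, mul_smul, mul_smul]
  obtain ⟨δ, hδpos, hδ⟩ := cone_local W
  -- points of K near 0 stay in P when translated to q
  have hKP : ∀ v ∈ K, ‖v‖ < δ → q + v ∈ P := by
    rintro v ⟨f, hfnn, rfl⟩ hvδ
    obtain ⟨g, hgnn, hgsum1, hgsum⟩ := hδ f hfnn hvδ
    have hmemP : ∀ i ∈ W, q + i ∈ P := by
      intro i hi
      obtain ⟨y, hy, rfl⟩ := Finset.mem_image.1 hi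
      have : y ∈ S := by rw [← hScoe]; exact hy
      have : y ∈ P := hP ▸ subset_convexHull ℝ S this
      simpa using this
    set a := ∑ i ∈ W, g i with ha
    have hann : 0 ≤ a := Finset.sum_nonneg fun i _ => hgnn i (by assumption)
    rcases eq_or_lt_of_le hann with heq | hlt
    · have hall : ∀ i ∈ W, g i = 0 := by
        intro i hi
        exact (Finset.sum_eq_zero_iff_of_nonneg (fun j hj => hgnn j hj)).1 heq.symm i hi
      have hv0 : ∑ i ∈ W, g i • i = 0 := Finset.sum_eq_zero fun i hi => by
        rw [hall i hi, zero_smul]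
      rw [← hgsum, hv0, add_zero]
      exact hqP
    · set y := ∑ i ∈ W, (g i / a) • (q + i) with hy
      have hyP : y ∈ P := hPconv.sum_mem
        (fun i hi => div_nonneg (hgnn i hi) hann)
        (by rw [← Finset.sum_div, ← ha, div_self hlt.ne'])
        (fun i hi => hmemP i hi)
      have hkey : a • y = a • q + ∑ i ∈ W, g i • i := by
        rw [hy, Finset.smul_sum]
        have : ∀ i ∈ W, a • ((g i / a) • (q + i)) = g i • q + g i • i := by
          intro i _
          rw [smul_smul, mul_div_cancel₀ _ hlt.ne', smul_add]
        rw [Finset.sum_congr rfl this, Finset.sum_add_distrib, ← Finset.sum_smul, ← ha]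
      have hsum_le : a ≤ 1 := hgsum1
      have : q + ∑ i ∈ W, g i • i = a • y + (1 - a) • q := by
        rw [hkey]
        module
      rw [← hgsum, this]
      exact hPconv hyP hqP hann (by linarith) (by ring)
  have hKbarP : ∀ v ∈ closure K, ‖v‖ < δ → q + v ∈ P := by
    intro v hv hvδ
    obtain ⟨u, huK, hulim⟩ := mem_closure_iff_seq_limit.1 hv
    have hnorm : ∀ᶠ n in Filter.atTop, ‖u n‖ < δ := hulim.norm.eventually_lt_const hvδ
    have hmem : ∀ᶠ n in Filter.atTop, q + u n ∈ P :=
      hnorm.mono fun n hn => hKP _ (huK n) hn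
    exact hPcl.mem_of_tendsto (tendsto_const_nhds.add hulim) hmem
  have hKbar_smul : ∀ c : ℝ, 0 < c → ∀ v ∈ closure K, c • v ∈ closure K := by
    intro c hc v hv
    have h1 : c • v ∈ c • closure K := Set.smul_mem_smul_set hv
    rw [← closure_smul₀' hc.ne'] at h1
    have h2 : c • K ⊆ K := by
      rintro y ⟨z, hz, rfl⟩
      exact hKcone c hc.le z hz
    exact closure_mono h2 h1
  have hIntsmul : ∀ c : ℝ, 0 < c → ∀ v ∈ interior (closure K),
      c • v ∈ interior (closure K) := by
    intro c hc v hv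
    have h1 : c • v ∈ c • interior (closure K) := Set.smul_mem_smul_set hv
    rw [← interior_smul₀ hc.ne'] at h1
    have h2 : c • closure K ⊆ closure K := by
      rintro y ⟨z, hz, rfl⟩
      exact hKbar_smul c hc z hz
    exact interior_mono h2 h1
  have hIntLoc1 : ∀ v : EuclideanSpace ℝ (Fin 3), ‖v‖ < δ →
      v ∈ interior (closure K) → q + v ∈ interior P := by
    intro v hvδ hvint
    rw [mem_interior_iff_mem_nhds, Metric.mem_nhds_iff] at hvint ⊢
    obtain ⟨r, hr, hball⟩ := hvint
    refine ⟨min r (δ - ‖v‖), lt_min hr (by linarith), fun y hy => ?_⟩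
    rw [Metric.mem_ball, dist_eq_norm] at hy
    have h1 : y - q ∈ Metric.ball v r := by
      rw [Metric.mem_ball, dist_eq_norm, sub_sub]
      exact lt_of_lt_of_le hy (min_le_left _ _)
    have h2 : ‖y - q‖ < δ := by
      have : ‖y - q - v‖ < δ - ‖v‖ := by
        rw [sub_sub]
        exact lt_of_lt_of_le hy (min_le_right _ _)
      calc ‖y - q‖ = ‖(y - q - v) + v‖ := by rw [sub_add_cancel]
        _ ≤ ‖y - q - v‖ + ‖v‖ := norm_add_le _ _
        _ < δ := by linarith
    have := hKbarP _ (hball h1) h2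
    simpa using this
  have hIntLoc2 : ∀ v : EuclideanSpace ℝ (Fin 3),
      q + v ∈ interior P → v ∈ interior (closure K) := by
    intro v hvint
    rw [mem_interior_iff_mem_nhds, Metric.mem_nhds_iff] at hvint ⊢
    obtain ⟨r, hr, hball⟩ := hvint
    refine ⟨r, hr, fun y hy => ?_⟩
    have h1 : q + y ∈ Metric.ball (q + v) r := by
      rw [Metric.mem_ball, dist_eq_norm] at hy ⊢
      simpa using hy
    have h2 : q + y ∈ P := hball h1
    have h3 : y ∈ K := by
      have := hKsub 1 zero_le_one (q + y) h2
      simpa using this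
    exact subset_closure h3
  have hfr1 : ∀ v : EuclideanSpace ℝ (Fin 3), ‖v‖ < δ → v ∈ closure K →
      v ∉ interior (closure K) → q + v ∈ frontier P := by
    intro v hvδ hvK hvint
    refine ⟨subset_closure (hKbarP v hvK hvδ), fun h => hvint (hIntLoc2 v h)⟩
  have hfr2 : ∀ v : EuclideanSpace ℝ (Fin 3), ‖v‖ < δ → q + v ∈ frontier P →
      v ∈ closure K ∧ v ∉ interior (closure K) := by
    intro v hvδ hvfr
    have h1 : q + v ∈ P := hPcl.closure_eq ▸ hvfr.1
    have h2 : v ∈ K := by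
      have := hKsub 1 zero_le_one (q + v) h1
      simpa using this
    exact ⟨subset_closure h2, fun h => hvfr.2 (hIntLoc1 v hvδ h)⟩
  have hq_not_int : ∀ c : ℝ, 0 < c → c • q ∉ interior (closure K) := by
    intro c hc hin
    set t := δ / (2 * (‖q‖ + 1)) with ht
    have htpos : 0 < t := by positivity
    have h1 : t • q ∈ interior (closure K) := by
      have := hIntsmul (t / c) (by positivity) _ hin
      rwa [smul_smul, div_mul_cancel₀ _ hc.ne'] at this
    have h2 : ‖t • q‖ < δ := by
      rw [norm_smul, Real.norm_eq_abs, abs_of_pos htpos, ht]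
      rw [div_mul_eq_mul_div, div_lt_iff₀ (by positivity)]
      nlinarith [hqnorm]
    have h3 : q + t • q ∈ interior P := hIntLoc1 _ h2 h1
    have h4 : q = (1 + t)⁻¹ • (q + t • q) + (t / (1 + t)) • (0 : EuclideanSpace ℝ (Fin 3)) := by
      rw [smul_zero, add_zero]
      have : q + t • q = (1 + t) • q := by module
      rw [this, smul_smul, inv_mul_cancel₀ (by positivity), one_smul]
    have h5 : q ∈ interior P := by
      rw [h4]
      refine hPconv.combo_interior_self_mem_interior h3 (interior_subset h0)
        (by positivity) (by positivity) ?_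
      field_simp
    exact hqni h5
  -- the compact set of unit vectors in the closed cone
  set A : Set (EuclideanSpace ℝ (Fin 3)) := closure K ∩ Metric.sphere 0 1 with hA
  have hAcomp : IsCompact A := (isCompact_sphere 0 1).inter_left isClosed_closure
  obtain ⟨x, hxP, hxq⟩ := hreg
  have hqu : 0 < ⟪q, x - q⟫ := by
    rw [inner_sub_right, real_inner_self_eq_norm_sq]
    have := real_inner_comm q x
    linarith
  have hune : x - q ≠ 0 := by
    intro h
    rw [h, inner_zero_right] at hqu
    exact lt_irrefl 0 hqu
  have hunorm : 0 < ‖x - q‖ := norm_pos_iff.2 hune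
  have hunormA : ‖x - q‖⁻¹ • (x - q) ∈ A := by
    constructor
    · exact subset_closure (hKsub _ (inv_nonneg.2 hunorm.le) x hxP)
    · rw [mem_sphere_zero_iff_norm, norm_smul, Real.norm_eq_abs, abs_of_pos (inv_pos.2 hunorm)]
      exact inv_mul_cancel₀ hunorm.ne'
  have hfcont : Continuous (fun v : EuclideanSpace ℝ (Fin 3) => ⟪q, v⟫) :=
    continuous_const.inner continuous_id
  obtain ⟨v₀, hv₀A, hv₀max'⟩ := hAcomp.exists_isMaxOn ⟨_, hunormA⟩ hfcont.continuousOn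
  have hv₀max : ∀ v ∈ A, ⟪q, v⟫ ≤ ⟪q, v₀⟫ := fun v hv => hv₀max' hv
  have hv₀K : v₀ ∈ closure K := hv₀A.1
  have hv₀unit : ‖v₀‖ = 1 := mem_sphere_zero_iff_norm.1 hv₀A.2
  have hv₀pos : 0 < ⟪q, v₀⟫ := by
    have h1 : 0 < ⟪q, ‖x - q‖⁻¹ • (x - q)⟫ := by
      rw [real_inner_smul_right]
      exact mul_pos (inv_pos.2 hunorm) hqu
    exact lt_of_lt_of_le h1 (hv₀max _ hunormA)
  -- v₀ is not in the interior of the cone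
  have hv₀notint : v₀ ∉ interior (closure K) := by
    intro hint
    by_cases hveq : v₀ = ‖q‖⁻¹ • q
    · exact hq_not_int ‖q‖⁻¹ (inv_pos.2 hqnorm) (hveq ▸ hint)
    · have hCS : ⟪q, v₀⟫ < ‖q‖ := by
        rcases lt_or_eq_of_le (real_inner_le_norm q v₀) with h | h
        · rw [hv₀unit, mul_one] at h; exact h
        · exfalso
          have h2 : ⟪q, v₀⟫ = ‖q‖ * ‖v₀‖ := h
          have h3 := inner_eq_norm_mul_iff_real.1 h2
          rw [hv₀unit, one_smul] at h3
          apply hveq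
          calc v₀ = ‖q‖⁻¹ • (‖q‖ • v₀) := by
                rw [smul_smul, inv_mul_cancel₀ hqnorm.ne', one_smul]
            _ = ‖q‖⁻¹ • q := by rw [← h3]
      set u' := q - ⟪q, v₀⟫ • v₀ with hu'
      have hqu' : ⟪q, u'⟫ = ‖q‖ ^ 2 - ⟪q, v₀⟫ ^ 2 := by
        rw [hu', inner_sub_right, real_inner_smul_right, real_inner_self_eq_norm_sq]
        ring
      have hqu'pos : 0 < ⟪q, u'⟫ := by
        rw [hqu']; nlinarith [hv₀pos, hCS]
      have hv₀u' : ⟪v₀, u'⟫ = 0 := by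
        rw [hu', inner_sub_right, real_inner_smul_right, real_inner_comm v₀ q,
          real_inner_self_eq_norm_sq, hv₀unit]
        ring
      have hu'norm : 0 < ‖u'‖ := by
        rcases eq_or_ne u' 0 with h | h
        · rw [h, inner_zero_right] at hqu'pos; exact absurd hqu'pos (lt_irrefl 0)
        · exact norm_pos_iff.2 h
      obtain ⟨r, hrpos, hball⟩ := Metric.isOpen_iff.1 isOpen_interior v₀ hint
      set s := min (r / (2 * ‖u'‖)) (⟪q, u'⟫ / (2 * ⟪q, v₀⟫ * ‖u'‖ ^ 2)) with hs
      have hspos : 0 < s := lt_min (by positivity) (by positivity)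
      set z := v₀ + s • u' with hz
      have hzint : z ∈ interior (closure K) := by
        apply hball
        rw [Metric.mem_ball, dist_eq_norm, hz, add_sub_cancel_left, norm_smul,
          Real.norm_eq_abs, abs_of_pos hspos]
        have h1 : s ≤ r / (2 * ‖u'‖) := min_le_left _ _
        have h2 : s * ‖u'‖ ≤ r / 2 := by
          calc s * ‖u'‖ ≤ (r / (2 * ‖u'‖)) * ‖u'‖ := mul_le_mul_of_nonneg_right h1 hu'norm.le
            _ = r / 2 := by field_simp
        linarith
      have hznorm2 : ‖z‖ ^ 2 = 1 + s ^ 2 * ‖u'‖ ^ 2 := by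
        rw [hz, norm_add_sq_real, hv₀unit, real_inner_smul_right, hv₀u', norm_smul,
          Real.norm_eq_abs, abs_of_pos hspos]
        ring
      have hzpos : 0 < ‖z‖ := by
        have hzne : z ≠ 0 := by
          intro h
          rw [h, norm_zero] at hznorm2
          nlinarith [sq_nonneg (s * ‖u'‖), mul_pos hspos hu'norm]
        exact norm_pos_iff.2 hzne
      have hznormle : ‖z‖ ≤ 1 + s ^ 2 * ‖u'‖ ^ 2 / 2 := by
        nlinarith [hznorm2, norm_nonneg z, sq_nonneg (s ^ 2 * ‖u'‖ ^ 2)]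
      have hwA : ‖z‖⁻¹ • z ∈ A := by
        constructor
        · exact hKbar_smul _ (inv_pos.2 hzpos) z (interior_subset hzint)
        · rw [mem_sphere_zero_iff_norm, norm_smul, Real.norm_eq_abs,
            abs_of_pos (inv_pos.2 hzpos)]
          exact inv_mul_cancel₀ hzpos.ne'
      have hfw : ⟪q, ‖z‖⁻¹ • z⟫ = ‖z‖⁻¹ * (⟪q, v₀⟫ + s * ⟪q, u'⟫) := by
        rw [real_inner_smul_right, hz, inner_add_right, real_inner_smul_right]
      have hs2 : s ≤ ⟪q, u'⟫ / (2 * ⟪q, v₀⟫ * ‖u'‖ ^ 2) := min_le_right _ _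
      have hs3 : s * (2 * ⟪q, v₀⟫ * ‖u'‖ ^ 2) ≤ ⟪q, u'⟫ := by
        rw [← le_div_iff₀ (by positivity)]
        exact hs2
      have hkey : ⟪q, v₀⟫ * ‖z‖ < ⟪q, v₀⟫ + s * ⟪q, u'⟫ := by
        have h1 : ⟪q, v₀⟫ * ‖z‖ ≤ ⟪q, v₀⟫ * (1 + s ^ 2 * ‖u'‖ ^ 2 / 2) :=
          mul_le_mul_of_nonneg_left hznormle hv₀pos.le
        nlinarith [mul_le_mul_of_nonneg_left hs3 hspos.le, hspos, hqu'pos, hv₀pos,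
          mul_pos hspos hqu'pos]
      have hle := hv₀max _ hwA
      rw [hfw] at hle
      have h2 : ⟪q, v₀⟫ + s * ⟪q, u'⟫ ≤ ⟪q, v₀⟫ * ‖z‖ := by
        rw [inv_mul_eq_div, div_le_iff₀ hzpos] at hle
        linarith [hle]
      linarith
  -- v₀ is a boundary tangent direction
  have hv₀tan : ‖v₀‖ = 1 ∧ ∃ ε > (0:ℝ), ∀ t ∈ Set.Icc (0:ℝ) ε, q + t • v₀ ∈ frontier P := by
    refine ⟨hv₀unit, δ / 2, by positivity, fun t ht => ?_⟩
    rcases eq_or_lt_of_le ht.1 with h0t | h0t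
    · rw [← h0t, zero_smul, add_zero]; exact hq
    · have h1 : t • v₀ ∈ closure K := hKbar_smul t h0t v₀ hv₀K
      have h2 : t • v₀ ∉ interior (closure K) := by
        intro h
        apply hv₀notint
        have h3 := hIntsmul t⁻¹ (inv_pos.2 h0t) _ h
        rwa [smul_smul, inv_mul_cancel₀ h0t.ne', one_smul] at h3
      have h3 : ‖t • v₀‖ < δ := by
        rw [norm_smul, Real.norm_eq_abs, abs_of_pos h0t, hv₀unit, mul_one]
        linarith [ht.2, hδpos]
      exact hfr1 _ h3 h1 h2
  -- any tangent direction lies in the cone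
  have htanK : ∀ v : EuclideanSpace ℝ (Fin 3), ‖v‖ = 1 →
      (∃ ε > (0:ℝ), ∀ t ∈ Set.Icc (0:ℝ) ε, q + t • v ∈ frontier P) → v ∈ closure K := by
    intro v hvunit htan'
    obtain ⟨ε, hε, htan⟩ := htan'
    set t := min ε (δ / 2) with htdef
    have htpos : 0 < t := lt_min hε (by positivity)
    have hfrt := htan t ⟨htpos.le, min_le_left _ _⟩
    have hnorm : ‖t • v‖ < δ := by
      rw [norm_smul, Real.norm_eq_abs, abs_of_pos htpos, hvunit, mul_one]
      calc t ≤ δ / 2 := min_le_right _ _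
        _ < δ := by linarith
    have h1 := (hfr2 _ hnorm hfrt).1
    have h2 := hKbar_smul t⁻¹ (inv_pos.2 htpos) _ h1
    rwa [smul_smul, inv_mul_cancel₀ htpos.ne', one_smul] at h2
  -- strict maximality among unit vectors of the cone
  have hstrict : ∀ v : EuclideanSpace ℝ (Fin 3), ‖v‖ = 1 → v ∈ closure K → v ≠ v₀ →
      ⟪q, v⟫ < ⟪q, v₀⟫ := by
    intro v hvunit hvK hne
    have hvA : v ∈ A := ⟨hvK, mem_sphere_zero_iff_norm.2 hvunit⟩
    rcases lt_or_eq_of_le (hv₀max v hvA) with h | h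
    · exact h
    exfalso
    have hsub0 : v - v₀ ≠ 0 := sub_ne_zero.2 hne
    have hsubpos : 0 < ‖v - v₀‖ := norm_pos_iff.2 hsub0
    have hip : ⟪v, v₀⟫ < 1 := by
      have h1 : 0 < ‖v - v₀‖ ^ 2 := by positivity
      rw [norm_sub_sq_real, hvunit, hv₀unit] at h1
      nlinarith
    set w' := (1/2 : ℝ) • v + (1/2 : ℝ) • v₀ with hw'
    have hw'K : w' ∈ closure K :=
      hKconv.closure hvK hv₀K (by norm_num) (by norm_num) (by norm_num)
    have hfw' : ⟪q, w'⟫ = ⟪q, v₀⟫ := by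
      rw [hw', inner_add_right, real_inner_smul_right, real_inner_smul_right, h]
      ring
    have hw'norm : ‖w'‖ < 1 := by
      have e1 : w' = (1/2 : ℝ) • (v + v₀) := by rw [hw', smul_add]
      have e2 : ‖v + v₀‖ ^ 2 = 2 + 2 * ⟪v, v₀⟫ := by
        rw [norm_add_sq_real, hvunit, hv₀unit]; ring
      have e3 : ‖v + v₀‖ < 2 := by nlinarith [norm_nonneg (v + v₀), hip]
      rw [e1, norm_smul, Real.norm_eq_abs, abs_of_pos (by norm_num : (0:ℝ) < 1/2)]
      linarith
    have hw'pos : 0 < ‖w'‖ := by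
      have hne0 : w' ≠ 0 := by
        intro hh
        rw [hh, inner_zero_right] at hfw'
        linarith
      exact norm_pos_iff.2 hne0
    have hwA : ‖w'‖⁻¹ • w' ∈ A := by
      refine ⟨hKbar_smul _ (inv_pos.2 hw'pos) _ hw'K, ?_⟩
      rw [mem_sphere_zero_iff_norm, norm_smul, Real.norm_eq_abs,
        abs_of_pos (inv_pos.2 hw'pos)]
      exact inv_mul_cancel₀ hw'pos.ne'
    have hgt : ⟪q, v₀⟫ < ⟪q, ‖w'‖⁻¹ • w'⟫ := by
      rw [real_inner_smul_right, hfw']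
      have hinv : 1 < ‖w'‖⁻¹ := (one_lt_inv₀ hw'pos).2 hw'norm
      exact lt_mul_of_one_lt_left hv₀pos hinv
    linarith [hv₀max _ hwA, hgt]
  have hmax : ∀ v : EuclideanSpace ℝ (Fin 3),
      (‖v‖ = 1 ∧ ∃ ε > (0:ℝ), ∀ t ∈ Set.Icc (0:ℝ) ε, q + t • v ∈ frontier P) →
      v ≠ v₀ → ⟪q, v⟫ < ⟪q, v₀⟫ := by
    rintro v ⟨hvunit, hvtan⟩ hne
    exact hstrict v hvunit (htanK v hvunit hvtan) hne
  refine ⟨v₀, ⟨hv₀tan, hv₀pos, hmax⟩, ?_⟩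
  rintro y ⟨hytan, hypos, hymax⟩
  by_contra hne
  have h1 : ⟪q, y⟫ < ⟪q, v₀⟫ := hmax y hytan hne
  have h2 : ⟪q, v₀⟫ < ⟪q, y⟫ := hymax v₀ hv₀tan (fun hh => hne hh.symm)
  linarith
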